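/- Let δ > 0 and let f : (t₀,∞) → ℝ be differentiable with |f'(t) + δ·f(t)/t| ≤ h(t)/t^ε for a nonnegative integrable function h and 0 < ε ≤ δ. If the limit f_∞ := lim_{t→∞} |f(t)| exists and is positive, then ∫_t^∞ (δ·f_∞/s) ds diverges while |f_∞ − |f(T)|| remains bounded, a contradiction; hence lim_{t→∞} f(t) = 0. -/

import Mathlib

open MeasureTheory Set Filter

set_option maxHeartbeats 1000000 in
/-- **Key contradiction step of the ODE asymptotic lemma.**
Let `δ > 0`, `0 < ε ≤ δ`, and let `f` be differentiable on `(t₀,∞)` with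
`|f'(t) + δ f(t)/t| ≤ h(t)/t^ε` for a nonnegative integrable `h`.
If the limit `L = lim_{t→∞} |f(t)|` exists, then it cannot be positive
(integrating the differential inequality against the divergent integral `∫ ds/s`
yields a contradiction); hence `L = 0` and `lim_{t→∞} f(t) = 0`. -/
theorem stmt_2 (δ ε t₀ L : ℝ) (hδ : 0 < δ) (hε0 : 0 < ε) (hε : ε ≤ δ)
    (h f : ℝ → ℝ)
    (hh_int : IntegrableOn h (Ici t₀))
    (hh_nonneg : ∀ t ∈ Ici t₀, 0 ≤ h t)
    (hf_diff : ∀ t ∈ Ioi t₀, DifferentiableAt ℝ f t)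
    (hf_ode : ∀ t ∈ Ioi t₀, |deriv f t + δ * f t / t| ≤ h t / t ^ ε)
    (hf_lim : Tendsto (fun t => |f t|) atTop (nhds L)) :
    L = 0 ∧ Tendsto f atTop (nhds 0) := by
  have hL0 : 0 ≤ L := ge_of_tendsto hf_lim (Eventually.of_forall fun t => abs_nonneg _)
  have hLnot : ¬ 0 < L := by
    intro hL
    -- choose T large
    obtain ⟨T₁, hT₁⟩ := (Filter.eventually_atTop.mp
      (hf_lim.eventually (eventually_gt_nhds (by linarith : L / 2 < L))))
    set T : ℝ := max T₁ (max (t₀ + 1) 1) with hTdef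
    have hTt₀ : t₀ < T :=
      lt_of_lt_of_le (lt_add_one t₀) ((le_max_left _ _).trans (le_max_right _ _))
    have hT1 : (1 : ℝ) ≤ T := (le_max_right _ _).trans (le_max_right _ _)
    have hT0 : (0 : ℝ) < T := lt_of_lt_of_le one_pos hT1
    have habs : ∀ t, T ≤ t → L / 2 < |f t| := fun t ht =>
      hT₁ t ((le_max_left _ _).trans ht)
    set s : ℝ := if 0 ≤ f T then 1 else -1 with hsdef
    set g : ℝ → ℝ := fun t => s * f t with hgdef
    have hs1 : |s| = 1 := by
      rw [hsdef]; split_ifs <;> simp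
    have hgabs : ∀ t, |g t| = |f t| := by
      intro t; rw [hgdef]; simp [abs_mul, hs1]
    have hgT : L / 2 ≤ g T := by
      rw [hgdef, hsdef]
      split_ifs with hfT
      · simpa [abs_of_nonneg hfT] using (habs T le_rfl).le
      · push_neg at hfT
        simpa [abs_of_neg hfT] using (habs T le_rfl).le
    have hgcont : ∀ a b : ℝ, T ≤ a → ContinuousOn g (Icc a b) := by
      intro a b ha
      intro x hx
      have hx' : x ∈ Ioi t₀ := lt_of_lt_of_le hTt₀ (ha.trans hx.1)
      exact (continuousAt_const.mul (hf_diff x hx').continuousAt).continuousWithinAt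
    have hgpos : ∀ t, T ≤ t → L / 2 ≤ g t := by
      intro t ht
      by_contra hlt
      push_neg at hlt
      have habs' : L / 2 < |g t| := (hgabs t) ▸ habs t ht
      have hgt_neg : g t < 0 := by
        rcases lt_or_ge (g t) 0 with h1 | h1
        · exact h1
        · exfalso; rw [abs_of_nonneg h1] at habs'; linarith
      -- intermediate value : g has a zero between T and t, contradiction
      have h0mem : (0 : ℝ) ∈ Icc (g t) (g T) := ⟨hgt_neg.le, by linarith⟩
      obtain ⟨c, hc, hc0⟩ := intermediate_value_Icc' ht (hgcont T t le_rfl) h0mem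
      have := habs c hc.1
      rw [← hgabs c, hc0] at this
      simp at this; linarith
    -- the integral of h over Ici t₀
    set I : ℝ := ∫ y in Ici t₀, h y with hIdef
    have hI0 : 0 ≤ I := setIntegral_nonneg measurableSet_Ici hh_nonneg
    -- choose b
    set K : ℝ := (g T + I) * (2 / (δ * L)) + 1 with hKdef
    have hK0 : 0 < K := by
      have h1 : 0 < g T + I := by linarith
      have h2 : 0 < 2 / (δ * L) := by positivity
      have h3 := mul_pos h1 h2
      rw [hKdef]; linarith
    set b : ℝ := T * Real.exp K with hbdef
    have hbT : T < b := by
      rw [hbdef]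
      nlinarith [Real.one_lt_exp_iff.mpr hK0, Real.exp_pos K]
    have hsub : Icc T b ⊆ Ici t₀ := fun x hx => le_of_lt (lt_of_lt_of_le hTt₀ hx.1)
    -- integrability pieces
    have hφ1int : IntegrableOn (fun y => -(δ * (L / 2) / y)) (Icc T b) := by
      apply ContinuousOn.integrableOn_compact isCompact_Icc
      apply ContinuousOn.neg
      apply ContinuousOn.div continuousOn_const continuousOn_id
      intro x hx; exact ne_of_gt (lt_of_lt_of_le hT0 hx.1)
    have hintε : IntegrableOn (fun y => h y / y ^ ε) (Icc T b) := by
      have hmeas : AEStronglyMeasurable (fun y => h y / y ^ ε)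
          (volume.restrict (Icc T b)) := by
        simp only [div_eq_mul_inv]
        exact (hh_int.mono_set hsub).aestronglyMeasurable.mul
          ((Real.continuous_rpow_const hε0.le).measurable.inv.aestronglyMeasurable)
      apply Integrable.mono (hh_int.mono_set hsub) hmeas
      filter_upwards [ae_restrict_mem measurableSet_Icc] with y hy
      have hy1 : (1 : ℝ) ≤ y := hT1.trans hy.1
      have hyε : (1 : ℝ) ≤ y ^ ε := Real.one_le_rpow hy1 hε0.le
      rw [Real.norm_eq_abs, Real.norm_eq_abs, abs_div]
      calc |h y| / |y ^ ε| = |h y| / (y ^ ε) := by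
            rw [abs_of_nonneg (by positivity : (0:ℝ) ≤ y ^ ε)]
        _ ≤ |h y| := div_le_self (abs_nonneg _) hyε
    set φ : ℝ → ℝ := fun y => -(δ * (L / 2) / y) + h y / y ^ ε with hφdef
    have hφint : IntegrableOn φ (Icc T b) := hφ1int.add hintε
    have hderiv : ∀ x ∈ Ioo T b, HasDerivWithinAt g (s * deriv f x) (Ioi x) x := by
      intro x hx
      have hx' : x ∈ Ioi t₀ := lt_trans hTt₀ hx.1
      exact (((hf_diff x hx').hasDerivAt).const_mul s).hasDerivWithinAt
    have hbound : ∀ x ∈ Ioo T b, s * deriv f x ≤ φ x := by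
      intro x hx
      have hx0 : (0 : ℝ) < x := lt_of_le_of_lt hT0.le hx.1
      have hx' : x ∈ Ioi t₀ := lt_trans hTt₀ hx.1
      have hode := hf_ode x hx'
      have h1 : s * (deriv f x + δ * f x / x) ≤ h x / x ^ ε := by
        calc s * (deriv f x + δ * f x / x) ≤ |s * (deriv f x + δ * f x / x)| := le_abs_self _
          _ = |deriv f x + δ * f x / x| := by rw [abs_mul, hs1, one_mul]
          _ ≤ h x / x ^ ε := hode
      have h2 : s * deriv f x + δ * g x / x = s * (deriv f x + δ * f x / x) := by
        rw [hgdef]; ring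
      have h3 : δ * (L / 2) / x ≤ δ * g x / x := by
        gcongr
        exact hgpos x hx.1.le
      rw [hφdef]
      simp only
      linarith [h1, h2 ▸ h1]
    clear_value T s g I K b φ
    have key : g b - g T ≤ ∫ y in T..b, φ y :=
      intervalIntegral.sub_le_integral_of_hasDeriv_right_of_le hbT.le (hgcont T b le_rfl)
        hderiv hφint hbound
    -- evaluate / bound the integral of φ
    have hb0 : (0 : ℝ) < b := lt_trans hT0 hbT
    have huIcc : uIcc T b = Icc T b := uIcc_of_le hbT.le
    have hint1 : IntervalIntegrable (fun y => -(δ * (L / 2) / y)) volume T b :=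
      (show IntegrableOn _ (uIcc T b) volume by rw [huIcc]; exact hφ1int).intervalIntegrable
    have hint2 : IntervalIntegrable (fun y => h y / y ^ ε) volume T b :=
      (show IntegrableOn _ (uIcc T b) volume by rw [huIcc]; exact hintε).intervalIntegrable
    have hsplit : ∫ y in T..b, φ y =
        (∫ y in T..b, -(δ * (L / 2) / y)) + ∫ y in T..b, h y / y ^ ε := by
      rw [hφdef]
      exact intervalIntegral.integral_add hint1 hint2
    have h0mem : (0 : ℝ) ∉ uIcc T b := by
      rw [huIcc]; intro hmem; exact absurd hmem.1 (not_le.mpr hT0)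
    have heval : ∫ y in T..b, -(δ * (L / 2) / y) = -(δ * (L / 2)) * Real.log (b / T) := by
      have hrw : ∀ y : ℝ, -(δ * (L / 2) / y) = -(δ * (L / 2)) * y⁻¹ := by
        intro y; field_simp
      simp_rw [hrw]
      rw [intervalIntegral.integral_const_mul, integral_inv h0mem]
    have hlogK : Real.log (b / T) = K := by
      rw [hbdef, mul_comm, mul_div_assoc, div_self hT0.ne', mul_one, Real.log_exp]
    have hbound2 : ∫ y in T..b, h y / y ^ ε ≤ I := by
      have step1 : ∫ y in T..b, h y / y ^ ε ≤ ∫ y in T..b, h y := by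
        apply intervalIntegral.integral_mono_on hbT.le hint2
        · exact (show IntegrableOn h (uIcc T b) volume by
            rw [huIcc]; exact hh_int.mono_set hsub).intervalIntegrable
        · intro y hy
          have hy1 : (1 : ℝ) ≤ y := hT1.trans hy.1
          have hyε : (1 : ℝ) ≤ y ^ ε := Real.one_le_rpow hy1 hε0.le
          exact div_le_self (hh_nonneg y (hsub hy)) hyε
      have step2 : ∫ y in T..b, h y ≤ I := by
        rw [intervalIntegral.integral_of_le hbT.le, hIdef]
        apply setIntegral_mono_set hh_int
        · filter_upwards [ae_restrict_mem measurableSet_Ici] with y hy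
          exact hh_nonneg y hy
        · exact HasSubset.Subset.eventuallyLE
            (fun x hx => le_of_lt (lt_of_le_of_lt hTt₀.le hx.1))
      linarith
    have hgb : L / 2 ≤ g b := hgpos b hbT.le
    have hKeval : δ * (L / 2) * K = (g T + I) + δ * (L / 2) := by
      rw [hKdef]
      have hδL : δ * L ≠ 0 := by positivity
      field_simp
    have hfinal : g b ≤ g T + (-(δ * (L / 2)) * K + I) := by
      calc g b = g T + (g b - g T) := by ring
        _ ≤ g T + ∫ y in T..b, φ y := by linarith
        _ = g T + ((∫ y in T..b, -(δ * (L / 2) / y)) + ∫ y in T..b, h y / y ^ ε) := by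
            rw [hsplit]
        _ ≤ g T + (-(δ * (L / 2)) * K + I) := by
            rw [heval, hlogK]; linarith
    nlinarith [hfinal, hKeval, hgb, hL]
  have hLeq : L = 0 := le_antisymm (not_lt.mp hLnot) hL0
  refine ⟨hLeq, ?_⟩
  have habs0 : Tendsto (fun t => |f t|) atTop (nhds 0) := hLeq ▸ hf_lim
  exact squeeze_zero_norm (fun t => le_of_eq (Real.norm_eq_abs _)) habs0
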